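/- arXiv:2110.12060 — 2 statements merged into one kernel-verified Lean document; each statement's English description precedes it below -/
import Mathlib

section
/- Let 1 ≤ p < ∞ and let Y be a closed G-invariant linear subspace of L^p(μ). Then the set of elements of Y that have a continuous representative is dense in Y with respect to the L^p-norm. -/
open MeasureTheory
open scoped ENNReal

open Filter

set_option maxHeartbeats 1000000

/-- Tube lemma: a continuous real function vanishing on `{p₀} × Q` (`Q` compact) is uniformly
small on `V × Q` for some neighborhood `V` of `p₀`. -/
lemma aux_tube {P Q : Type*} [TopologicalSpace P] [TopologicalSpace Q] [CompactSpace Q]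
    {k : P × Q → ℝ} (hk : Continuous k) (p₀ : P) (h0 : ∀ q, k (p₀, q) = 0)
    {ε : ℝ} (hε : 0 < ε) :
    ∃ V : Set P, IsOpen V ∧ p₀ ∈ V ∧ ∀ p ∈ V, ∀ q, |k (p, q)| < ε := by
  have hopen : IsOpen {z : P × Q | |k z| < ε} := isOpen_lt hk.abs continuous_const
  have hsub : ({p₀} : Set P) ×ˢ (Set.univ : Set Q) ⊆ {z | |k z| < ε} := by
    rintro ⟨p, q⟩ ⟨hp, -⟩
    simp only [Set.mem_singleton_iff] at hp
    subst hp
    simp [Set.mem_setOf_eq, h0 q, hε]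
  obtain ⟨u, v, hu, _hv, hpu, hqv, huv⟩ :=
    generalized_tube_lemma isCompact_singleton isCompact_univ hopen hsub
  exact ⟨u, hu, hpu rfl, fun p hp q => huv ⟨hp, hqv (Set.mem_univ q)⟩⟩

/-- Two finite regular Borel measures on a compact Hausdorff space which give the same integral
to every continuous function are equal. -/
lemma aux_measure_ext {X : Type*} [TopologicalSpace X] [CompactSpace X] [T2Space X]
    [MeasurableSpace X] [BorelSpace X]
    (μ ν : Measure X) [IsFiniteMeasure μ] [IsFiniteMeasure ν] [μ.Regular] [ν.Regular]
    (h : ∀ f : C(X, ℝ), ∫ x, f x ∂μ = ∫ x, f x ∂ν) : μ = ν := by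
  have key : ∀ (μ ν : Measure X), IsFiniteMeasure μ → IsFiniteMeasure ν →
      μ.Regular → ν.Regular →
      (∀ f : C(X, ℝ), ∫ x, f x ∂μ = ∫ x, f x ∂ν) → ∀ U : Set X, IsOpen U → μ U ≤ ν U := by
    intro μ ν hμf hνf hμr hνr h U hU
    refine le_of_forall_lt fun r hr => ?_
    obtain ⟨K, hKU, hKc, hrK⟩ := hμr.innerRegular hU r hr
    refine hrK.trans_le ?_
    obtain ⟨φ, hφ1, hφ0, -, hφ01⟩ := exists_continuous_one_zero_of_isCompact hKc
      hU.isClosed_compl (disjoint_compl_right.mono_left hKU)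
    have hφint_μ : Integrable (⇑φ) μ :=
      (map_continuous φ).integrable_of_hasCompactSupport (HasCompactSupport.of_compactSpace _)
    have hφint_ν : Integrable (⇑φ) ν :=
      (map_continuous φ).integrable_of_hasCompactSupport (HasCompactSupport.of_compactSpace _)
    have h1 : (μ K).toReal ≤ ∫ x, φ x ∂μ := by
      have e1 : (μ K).toReal = ∫ _ in K, (1 : ℝ) ∂μ := by simp; rfl
      rw [e1]
      have e2 : ∫ _ in K, (1 : ℝ) ∂μ = ∫ x in K, φ x ∂μ :=
        setIntegral_congr_fun hKc.measurableSet fun x hx => (hφ1 hx).symm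
      rw [e2]
      exact setIntegral_le_integral hφint_μ
        (Filter.Eventually.of_forall fun x => (hφ01 x).1)
    have h2 : ∫ x, φ x ∂ν ≤ (ν U).toReal := by
      have e1 : ∫ x, φ x ∂ν = ∫ x in U, φ x ∂ν :=
        (setIntegral_eq_integral_of_forall_compl_eq_zero fun x hx => hφ0 hx).symm
      rw [e1]
      calc ∫ x in U, φ x ∂ν ≤ ∫ _ in U, (1 : ℝ) ∂ν := by
            refine setIntegral_mono_on hφint_ν.integrableOn (integrableOn_const ?_)
              hU.measurableSet fun x _ => (hφ01 x).2
            exact (measure_lt_top ν U).ne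
        _ = (ν U).toReal := by simp; rfl
    have h3 : (μ K).toReal ≤ (ν U).toReal := h1.trans ((h φ) ▸ h2)
    exact (ENNReal.toReal_le_toReal (measure_ne_top μ K) (measure_ne_top ν U)).1 h3
  have hopen : ∀ U : Set X, IsOpen U → μ U = ν U := fun U hU =>
    le_antisymm (key μ ν ‹_› ‹_› ‹_› ‹_› h U hU)
      (key ν μ ‹_› ‹_› ‹_› ‹_› (fun f => (h f).symm) U hU)
  ext s hs
  rw [s.measure_eq_iInf_isOpen (μ := μ), s.measure_eq_iInf_isOpen (μ := ν)]
  exact iInf_congr fun U => iInf_congr fun hsU => iInf_congr fun hU => hopen U hU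

/-- Let `1 ≤ p < ∞` and let `Y` be a closed `G`-invariant linear subspace of
`L^p(μ)`. Then the set of elements of `Y` having a continuous representative is dense in `Y`
for the `L^p`-norm. -/
theorem continuous_representatives_dense
    {X : Type*} [TopologicalSpace X] [CompactSpace X] [T2Space X]
    [MeasurableSpace X] [BorelSpace X]
    {G : Type*} [Group G] [TopologicalSpace G] [IsTopologicalGroup G] [CompactSpace G]
    [MulAction G X] [ContinuousSMul G X] [MulAction.IsPretransitive G X]
    (μ : Measure X) [IsProbabilityMeasure μ] [μ.Regular]
    (hinv : ∀ (f : C(X, ℂ)) (α : G), ∫ x, f x ∂μ = ∫ x, f (α • x) ∂μ)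
    (p : ℝ≥0∞) [Fact (1 ≤ p)] (hp : p ≠ ∞)
    (Y : Submodule ℂ (Lp ℂ p μ)) (hYclosed : IsClosed (Y : Set (Lp ℂ p μ)))
    (hYinv : ∀ f ∈ Y, ∀ α : G, ∀ g : Lp ℂ p μ, (⇑g =ᵐ[μ] fun x => f (α • x)) → g ∈ Y) :
    ∀ f ∈ Y, f ∈ closure {g : Lp ℂ p μ | g ∈ Y ∧ ∃ h : C(X, ℂ), ⇑g =ᵐ[μ] ⇑h} := by
  intro f hf
  borelize G
  -- X is nonempty
  have hXne : Nonempty X := by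
    by_contra hne
    rw [not_nonempty_iff] at hne
    have h1 : μ Set.univ = 1 := measure_univ
    rw [Set.univ_eq_empty_iff.2 hne, measure_empty] at h1
    exact zero_ne_one h1
  obtain ⟨x₀⟩ := hXne
  -- real version of the invariance hypothesis
  have hinvR : ∀ (h : C(X, ℝ)) (α : G), ∫ x, h x ∂μ = ∫ x, h (α • x) ∂μ := by
    intro h α
    have h2 := hinv ⟨fun x => (RCLike.ofReal (h x) : ℂ), RCLike.continuous_ofReal.comp h.continuous⟩ α
    simp only [ContinuousMap.coe_mk] at h2
    rw [integral_ofReal, integral_ofReal] at h2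
    exact_mod_cast h2
  -- the action preserves μ
  have hmp0 : ∀ α : G, MeasurePreserving (fun x : X => α • x) μ μ := by
    intro α
    have hcont : Continuous fun x : X => α • x := continuous_const_smul α
    refine ⟨hcont.measurable, ?_⟩
    have hreg : (Measure.map (fun x : X => α • x) μ).Regular := by
      have := Measure.Regular.map (μ := μ) (Homeomorph.smul α (α := X))
      convert this using 2
      rfl
    have hprob : IsProbabilityMeasure (Measure.map (fun x : X => α • x) μ) :=
      Measure.isProbabilityMeasure_map hcont.measurable.aemeasurable
    refine aux_measure_ext _ _ ?_
    intro g
    rw [integral_map hcont.measurable.aemeasurable (map_continuous g).aestronglyMeasurable]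
    exact (hinvR g α).symm
  have hmp : ∀ α : G, MeasurePreserving (fun x : X => α⁻¹ • x) μ μ := fun α => hmp0 α⁻¹
  -- translation operators on Lp
  let T : G → Lp ℂ p μ →+ Lp ℂ p μ := fun α => Lp.compMeasurePreserving _ (hmp α)
  have hT_coe : ∀ (α : G) (g : Lp ℂ p μ), ⇑(T α g) =ᵐ[μ] fun x => g (α⁻¹ • x) := fun α g =>
    Lp.coeFn_compMeasurePreserving g (hmp α)
  have hT_norm : ∀ (α : G) (g : Lp ℂ p μ), ‖T α g‖ = ‖g‖ := fun α g =>
    Lp.norm_compMeasurePreserving g (hmp α)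
  have hTY : ∀ (α : G), ∀ g ∈ Y, T α g ∈ Y := fun α g hg =>
    hYinv g hg α⁻¹ (T α g) (hT_coe α g)
  have hT_comp : ∀ (α β : G) (g : Lp ℂ p μ), T α (T β g) = T (α * β) g := by
    intro α β g
    apply Lp.ext
    have h1 : ⇑(T α (T β g)) =ᵐ[μ] fun x => (T β g) (α⁻¹ • x) := hT_coe α _
    have h2 := (hmp α).quasiMeasurePreserving.ae_eq_comp (hT_coe β g)
    have h3 : ((fun x => g (β⁻¹ • x)) ∘ fun x : X => α⁻¹ • x) = fun x => g ((α * β)⁻¹ • x) := by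
      funext x
      simp [Function.comp, mul_smul]
    refine h1.trans (h2.trans ?_) |>.trans (hT_coe (α * β) g).symm
    rw [h3]
  have hT_one : ∀ g : Lp ℂ p μ, T 1 g = g := by
    intro g
    apply Lp.ext
    refine (hT_coe 1 g).trans ?_
    simp
  have hT_dist : ∀ (α : G) (u v : Lp ℂ p μ), dist (T α u) (T α v) = dist u v := by
    intro α u v
    rw [dist_eq_norm, dist_eq_norm, ← map_sub (T α), hT_norm]
  -- toLp
  let tL : C(X, ℂ) →L[ℂ] Lp ℂ p μ := ContinuousMap.toLp p μ ℂ
  have htL_coe : ∀ h : C(X, ℂ), ⇑(tL h) =ᵐ[μ] ⇑h := fun h => ContinuousMap.coeFn_toLp μ h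
  -- translation of continuous functions
  let Φ : G → C(X, ℂ) → C(X, ℂ) := fun α h =>
    h.comp ⟨fun x => α⁻¹ • x, continuous_const_smul α⁻¹⟩
  have hΦ_apply : ∀ (α : G) (h : C(X, ℂ)) (x : X), Φ α h x = h (α⁻¹ • x) := fun _ _ _ => rfl
  have hΦcont : ∀ h : C(X, ℂ), Continuous fun α => Φ α h := by
    intro h
    rw [continuous_iff_continuousAt]
    intro α₀
    rw [ContinuousAt, Metric.tendsto_nhds]
    intro ε hε
    obtain ⟨V, hVopen, hV1, hVsmall⟩ := aux_tube (P := G) (Q := X)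
      (k := fun z => ‖h (z.1⁻¹ • z.2) - h (α₀⁻¹ • z.2)‖)
      (by fun_prop) α₀ (fun q => by simp) hε
    filter_upwards [hVopen.mem_nhds hV1] with α hα
    rw [ContinuousMap.dist_lt_iff hε]
    intro x
    have := hVsmall α hα x
    rw [abs_of_nonneg (norm_nonneg _)] at this
    simpa [dist_eq_norm, hΦ_apply] using this
  have hΦ_one : ∀ h : C(X, ℂ), Φ 1 h = h := by
    intro h
    ext x
    simp [hΦ_apply]
  have hΦ_sub : ∀ (α : G) (h₁ h₂ : C(X, ℂ)), Φ α h₁ - Φ α h₂ = Φ α (h₁ - h₂) := by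
    intro α h₁ h₂
    ext x
    simp [hΦ_apply]
  have hΦ_toLp : ∀ (α : G) (h : C(X, ℂ)), tL (Φ α h) = T α (tL h) := by
    intro α h
    apply Lp.ext
    have e2 : ⇑(T α (tL h)) =ᵐ[μ] fun x => (tL h) (α⁻¹ • x) := hT_coe α _
    have e4 := (hmp α).quasiMeasurePreserving.ae_eq_comp (htL_coe h)
    exact (htL_coe (Φ α h)).trans (e2.trans e4).symm
  -- the L¹ bound for continuous functions
  have hL1 : ∀ h : C(X, ℂ), ∫ y, ‖h y‖ ∂μ ≤ ‖tL h‖ := by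
    intro h
    have m1 : ∫ y, ‖h y‖ ∂μ = (eLpNorm (⇑h) 1 μ).toReal := by
      rw [integral_norm_eq_lintegral_enorm (map_continuous h).aestronglyMeasurable,
        eLpNorm_one_eq_lintegral_enorm]
    have m2 : eLpNorm (⇑h) 1 μ ≤ eLpNorm (⇑h) p μ :=
      eLpNorm_le_eLpNorm_of_exponent_le Fact.out (map_continuous h).aestronglyMeasurable
    have m3 : eLpNorm (⇑h) p μ ≠ ∞ := by
      rw [← eLpNorm_congr_ae (htL_coe h)]
      exact (Lp.memLp (tL h)).2.ne
    rw [m1, Lp.norm_def, eLpNorm_congr_ae (htL_coe h)]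
    exact ENNReal.toReal_mono m3 m2
  -- quantitative continuity of translation at 1
  have hT1 : ∀ (u : Lp ℂ p μ) (δ : ℝ), 0 < δ →
      ∃ V : Set G, IsOpen V ∧ (1 : G) ∈ V ∧ ∀ α ∈ V, ‖T α u - u‖ < δ := by
    intro u δ hδ
    obtain ⟨h, hh⟩ := (ContinuousMap.toLp_denseRange (E := ℂ) μ ℂ hp).exists_dist_lt u
      (by positivity : (0:ℝ) < δ / 3)
    set W : Set G := (fun α => tL (Φ α h)) ⁻¹' Metric.ball (tL h) (δ / 3) with hW
    have hWopen : IsOpen W := (tL.continuous.comp (hΦcont h)).isOpen_preimage _ Metric.isOpen_ball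
    have hW1 : (1 : G) ∈ W := by
      simp [hW, hΦ_one, Metric.mem_ball, (show (0:ℝ) < δ / 3 by positivity)]
    refine ⟨W, hWopen, hW1, fun α hα => ?_⟩
    have h1 : ‖T α (u - tL h)‖ = ‖u - tL h‖ := hT_norm α _
    have h2 : ‖T α (tL h) - tL h‖ < δ / 3 := by
      have := hα
      rw [hW, Set.mem_preimage, Metric.mem_ball, dist_eq_norm, hΦ_toLp] at this
      exact this
    have h3 : ‖u - tL h‖ < δ / 3 := by
      rw [← dist_eq_norm]
      exact hh
    calc ‖T α u - u‖ = ‖T α (u - tL h) + (T α (tL h) - tL h) + (tL h - u)‖ := by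
          congr 1
          rw [map_sub (T α)]
          abel
      _ ≤ ‖T α (u - tL h)‖ + ‖T α (tL h) - tL h‖ + ‖tL h - u‖ := norm_add₃_le
      _ < δ / 3 + δ / 3 + δ / 3 := by
          have h4 : ‖tL h - u‖ < δ / 3 := by rwa [norm_sub_rev]
          rw [h1]
          exact add_lt_add (add_lt_add h3 h2) h4
      _ = δ := by ring
  -- full continuity of translation
  have hTcont : Continuous fun α => T α f := by
    rw [continuous_iff_continuousAt]
    intro α₀
    have key : Tendsto (fun β => dist (T β f) f) (nhds 1) (nhds 0) := by
      rw [Metric.tendsto_nhds]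
      intro ε hε
      obtain ⟨V, hVopen, hV1, hVsmall⟩ := hT1 f ε hε
      filter_upwards [hVopen.mem_nhds hV1] with β hβ
      rw [Real.dist_eq, sub_zero, abs_of_nonneg dist_nonneg, dist_eq_norm]
      exact hVsmall β hβ
    rw [ContinuousAt]
    rw [tendsto_iff_dist_tendsto_zero]
    have hdeq : ∀ α, dist (T α f) (T α₀ f) = dist (T (α₀⁻¹ * α) f) f := by
      intro α
      have e1 : T α₀ (T (α₀⁻¹ * α) f) = T α f := by
        rw [hT_comp]
        congr 1
        group
      have e2 : T α₀ (T 1 f) = T α₀ f := by rw [hT_one]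
      rw [← e1, ← e2, hT_dist, hT_one]
    simp only [hdeq]
    have hmul : Tendsto (fun α => α₀⁻¹ * α) (nhds α₀) (nhds 1) := by
      have h := (continuous_mul_left α₀⁻¹).tendsto α₀
      simpa using h
    exact key.comp hmul
  -- Haar measure on G
  let K₀ : TopologicalSpace.PositiveCompacts G :=
    ⟨⟨Set.univ, isCompact_univ⟩, by simp⟩
  let haar : Measure G := Measure.haarMeasure K₀
  have hhaarprob : IsProbabilityMeasure haar :=
    ⟨Measure.haarMeasure_self (K₀ := K₀)⟩
  -- the kernel identity
  have hker : ∀ (h : C(X, ℝ)) (x : X), ∫ α, h (α⁻¹ • x) ∂haar = ∫ y, h y ∂μ := by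
    intro h x
    set m : X → ℝ := fun x => ∫ α, h (α⁻¹ • x) ∂haar with hm
    have hmeq : ∀ (β : G) (y : X), m (β • y) = m y := by
      intro β y
      have e := integral_mul_left_eq_self (μ := haar) (fun α => h (α⁻¹ • (β • y))) β
      simp only [mul_inv_rev, mul_smul, inv_smul_smul] at e
      exact e.symm
    have hconst : ∀ y, m y = m x₀ := by
      intro y
      obtain ⟨β, hβ⟩ := MulAction.exists_smul_eq G x₀ y
      rw [← hβ, hmeq]
    have hFc : Continuous (Function.uncurry fun (y : X) (α : G) => h (α⁻¹ • y)) := by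
      fun_prop
    have swap := integral_integral_swap_of_hasCompactSupport hFc
      (HasCompactSupport.of_compactSpace _) (μ := μ) (ν := haar)
    calc m x = m x₀ := hconst x
      _ = ∫ _, m x₀ ∂μ := by simp
      _ = ∫ y, m y ∂μ := integral_congr_ae (.of_eq (funext fun y => (hconst y).symm))
      _ = ∫ α, ∫ y, h (α⁻¹ • y) ∂μ ∂haar := swap
      _ = ∫ _, ∫ y, h y ∂μ ∂haar :=
          integral_congr_ae (.of_eq (funext fun α => (hinvR h α⁻¹).symm))
      _ = ∫ y, h y ∂μ := by simp
  -- main ε-argument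
  rw [Metric.mem_closure_iff]
  intro ε hε
  obtain ⟨V, hVopen, hV1, hVsmall⟩ := hT1 f (ε / 2) (by positivity)
  set c : ℝ≥0∞ := (haar V)⁻¹ with hc_def
  have hV0 : haar V ≠ 0 := (hVopen.measure_pos haar ⟨1, hV1⟩).ne'
  have hVfin : haar V ≠ ⊤ := measure_ne_top haar V
  set ν : Measure G := c • haar.restrict V with hν_def
  have hνuniv : ν Set.univ = 1 := by
    rw [hν_def, Measure.smul_apply, Measure.restrict_apply MeasurableSet.univ, Set.univ_inter,
      smul_eq_mul]
    exact ENNReal.inv_mul_cancel hV0 hVfin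
  have hνprob : IsProbabilityMeasure ν := ⟨hνuniv⟩
  have hν_ae : ∀ᵐ α ∂ν, α ∈ V := by
    rw [ae_iff]
    have : {α : G | ¬ α ∈ V} = Vᶜ := rfl
    rw [this, hν_def, Measure.smul_apply, Measure.restrict_apply hVopen.measurableSet.compl,
      Set.compl_inter_self, measure_empty, smul_eq_mul, mul_zero]
  have hν_le : ν ≤ c • haar := by
    rw [hν_def]
    intro s
    rw [Measure.smul_apply, Measure.smul_apply, smul_eq_mul, smul_eq_mul]
    exact mul_le_mul_right (Measure.restrict_le_self s) c
  have hchaarfin : IsFiniteMeasure (c • haar) := by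
    constructor
    rw [Measure.smul_apply, smul_eq_mul]
    exact ENNReal.mul_lt_top (ENNReal.inv_ne_top.2 hV0).lt_top (measure_lt_top haar _)
  -- the convolution of f
  have hFint : Integrable (fun α => T α f) ν :=
    hTcont.integrable_of_hasCompactSupport (HasCompactSupport.of_compactSpace _)
  set g : Lp ℂ p μ := ∫ α, T α f ∂ν with hg_def
  have hgY : g ∈ Y := by
    have hconv : Convex ℝ (Y : Set (Lp ℂ p μ)) := by
      have := (Y.restrictScalars ℝ).convex
      simpa using this
    exact hconv.integral_mem hYclosed (Filter.Eventually.of_forall fun α => hTY α f hf) hFint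
  -- distance estimate
  have hdist : dist f g < ε := by
    rw [dist_eq_norm]
    have e1 : f - g = ∫ α, (f - T α f) ∂ν := by
      rw [integral_sub (integrable_const f) hFint, integral_const, probReal_univ]
      simp [hg_def]
    rw [e1]
    have hb : ‖∫ α, (f - T α f) ∂ν‖ ≤ ∫ _, ε / 2 ∂ν := by
      refine norm_integral_le_of_norm_le (integrable_const (ε / 2)) ?_
      filter_upwards [hν_ae] with α hα
      rw [norm_sub_rev]
      exact (hVsmall α hα).le
    have e2 : ∫ _, ε / 2 ∂ν = ε / 2 := by simp
    rw [e2] at hb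
    linarith
  -- the approximating sequence of continuous functions
  have hseq : ∀ n : ℕ, ∃ hc : C(X, ℂ), dist f (tL hc) < 1 / (n + 1) := by
    intro n
    obtain ⟨h, hh⟩ := (ContinuousMap.toLp_denseRange (E := ℂ) μ ℂ hp).exists_dist_lt f
      (by positivity : (0:ℝ) < 1 / (n + 1))
    exact ⟨h, hh⟩
  choose hc hhc using hseq
  have hlim : Filter.Tendsto (fun n => tL (hc n)) Filter.atTop (nhds f) := by
    rw [tendsto_iff_dist_tendsto_zero]
    refine squeeze_zero (fun n => dist_nonneg) (fun n => ?_)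
      tendsto_one_div_add_atTop_nhds_zero_nat
    rw [dist_comm]
    exact (hhc n).le
  -- the C(X, ℂ)-valued convolution
  have hΦint : ∀ h : C(X, ℂ), Integrable (fun α => Φ α h) ν := fun h =>
    (hΦcont h).integrable_of_hasCompactSupport (HasCompactSupport.of_compactSpace _)
  set J : C(X, ℂ) → C(X, ℂ) := fun h => ∫ α, Φ α h ∂ν with hJ_def
  have hJ_toLp : ∀ h : C(X, ℂ), tL (J h) = ∫ α, T α (tL h) ∂ν := by
    intro h
    rw [hJ_def, ← ContinuousLinearMap.integral_comp_comm tL (hΦint h)]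
    exact integral_congr_ae (.of_eq (funext fun α => hΦ_toLp α h))
  have hJ_eval : ∀ (h : C(X, ℂ)) (x : X), J h x = ∫ α, h (α⁻¹ • x) ∂ν := by
    intro h x
    have := ContinuousLinearMap.integral_comp_comm (ContinuousMap.evalCLM ℂ x) (hΦint h)
    exact this.symm
  have hJbound : ∀ (h : C(X, ℂ)) (x : X), ‖J h x‖ ≤ c.toReal * ‖tL h‖ := by
    intro h x
    rw [hJ_eval]
    have hint2 : Integrable (fun α => ‖h (α⁻¹ • x)‖) (c • haar) := by
      have : Continuous fun α : G => ‖h (α⁻¹ • x)‖ := by fun_prop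
      exact this.integrable_of_hasCompactSupport (HasCompactSupport.of_compactSpace _)
    calc ‖∫ α, h (α⁻¹ • x) ∂ν‖ ≤ ∫ α, ‖h (α⁻¹ • x)‖ ∂ν := norm_integral_le_integral_norm _
      _ ≤ ∫ α, ‖h (α⁻¹ • x)‖ ∂(c • haar) :=
          integral_mono_measure hν_le (Filter.Eventually.of_forall fun α => norm_nonneg _) hint2
      _ = c.toReal * ∫ α, ‖h (α⁻¹ • x)‖ ∂haar := by
          rw [integral_smul_measure]
          rfl
      _ = c.toReal * ∫ y, ‖h y‖ ∂μ := by
          have hk := hker ⟨fun y => ‖h y‖, h.continuous.norm⟩ x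
          simp only [ContinuousMap.coe_mk] at hk
          rw [hk]
      _ ≤ c.toReal * ‖tL h‖ :=
          mul_le_mul_of_nonneg_left (hL1 h) ENNReal.toReal_nonneg
  have hJnorm : ∀ h : C(X, ℂ), ‖J h‖ ≤ c.toReal * ‖tL h‖ := fun h =>
    (ContinuousMap.norm_le _ (by positivity)).2 (hJbound h)
  have hJsub : ∀ h₁ h₂ : C(X, ℂ), J h₁ - J h₂ = J (h₁ - h₂) := by
    intro h₁ h₂
    rw [hJ_def, ← integral_sub (hΦint h₁) (hΦint h₂)]
    exact integral_congr_ae (.of_eq (funext fun α => hΦ_sub α h₁ h₂))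
  -- the sequence J (hc n) is Cauchy in C(X, ℂ)
  have hcauchy : CauchySeq fun n => J (hc n) := by
    rw [Metric.cauchySeq_iff]
    intro δ hδ
    have hcs : CauchySeq fun n => tL (hc n) := hlim.cauchySeq
    rw [Metric.cauchySeq_iff] at hcs
    obtain ⟨N, hN⟩ := hcs (δ / (c.toReal + 1)) (by positivity)
    refine ⟨N, fun m hm n hn => ?_⟩
    have h1 : dist (J (hc m)) (J (hc n)) ≤ c.toReal * dist (tL (hc m)) (tL (hc n)) := by
      rw [dist_eq_norm, hJsub, dist_eq_norm, ← map_sub tL]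
      exact hJnorm _
    have h2 : dist (tL (hc m)) (tL (hc n)) < δ / (c.toReal + 1) := hN m hm n hn
    have h3 : (0:ℝ) ≤ c.toReal := ENNReal.toReal_nonneg
    calc dist (J (hc m)) (J (hc n)) ≤ c.toReal * dist (tL (hc m)) (tL (hc n)) := h1
      _ ≤ c.toReal * (δ / (c.toReal + 1)) := by
          exact mul_le_mul_of_nonneg_left h2.le h3
      _ < δ := by
          rw [mul_div_assoc']
          rw [div_lt_iff₀ (by positivity)]
          nlinarith
  obtain ⟨H, hH⟩ := cauchySeq_tendsto_of_complete hcauchy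
  refine ⟨g, ⟨hgY, H, ?_⟩, hdist⟩
  -- g = tL H
  have h1 : Filter.Tendsto (fun n => tL (J (hc n))) Filter.atTop (nhds (tL H)) :=
    (tL.continuous.tendsto H).comp hH
  have hcontr : ∀ u : Lp ℂ p μ, Integrable (fun α => T α u) ν →
      dist (∫ α, T α u ∂ν) (∫ α, T α f ∂ν) ≤ dist u f := by
    intro u hu
    rw [dist_eq_norm, ← integral_sub hu hFint]
    have hb : ‖∫ α, (T α u - T α f) ∂ν‖ ≤ ∫ _, dist u f ∂ν := by
      refine norm_integral_le_of_norm_le (integrable_const _) ?_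
      refine Filter.Eventually.of_forall fun α => ?_
      rw [← map_sub (T α), hT_norm, ← dist_eq_norm]
    simpa using hb
  have h2 : Filter.Tendsto (fun n => tL (J (hc n))) Filter.atTop (nhds g) := by
    rw [tendsto_iff_dist_tendsto_zero]
    have hb : ∀ n, dist (tL (J (hc n))) g ≤ dist (tL (hc n)) f := by
      intro n
      have hint : Integrable (fun α => T α (tL (hc n))) ν := by
        have hcont2 : Continuous fun α => T α (tL (hc n)) := by
          have hce : (fun α => T α (tL (hc n))) = fun α => tL (Φ α (hc n)) :=
            funext fun α => (hΦ_toLp α (hc n)).symm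
          rw [hce]
          exact tL.continuous.comp (hΦcont (hc n))
        exact hcont2.integrable_of_hasCompactSupport (HasCompactSupport.of_compactSpace _)
      rw [hJ_toLp, hg_def]
      exact hcontr (tL (hc n)) hint
    exact squeeze_zero (fun n => dist_nonneg) hb (tendsto_iff_dist_tendsto_zero.1 hlim)
  have hgH : tL H = g := tendsto_nhds_unique h1 h2
  have hfin := htL_coe H
  rw [hgH] at hfin
  exact hfin
end

section
/- Let Y be a G-invariant linear subspace of C(X) and let g ∈ C(X). If g does not lie in the closure of Y with respect to the supremum norm, then g does not lie in the closure of Y with respect to the L²(μ)-norm. -/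
set_option maxHeartbeats 1000000


open MeasureTheory Measure TopologicalSpace Set Function

section Aux

/-- A continuous function on a compact space is integrable with respect to a finite measure. -/
lemma aux_integrable_of_continuous {Z : Type*} [TopologicalSpace Z] [CompactSpace Z]
    [MeasurableSpace Z] [OpensMeasurableSpace Z] (ρ : Measure Z) [IsFiniteMeasure ρ]
    {E : Type*} [NormedAddCommGroup E] {f : Z → E} (hf : Continuous f) : Integrable f ρ :=
  hf.integrable_of_hasCompactSupport ((isClosed_tsupport _).isCompact)

variable {G : Type*} [Group G] [TopologicalSpace G] [IsTopologicalGroup G] [CompactSpace G]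
  [MeasurableSpace G] [BorelSpace G]

/-- A Haar probability measure on a compact group is right invariant. -/
lemma aux_haar_map_mul_right (ν : Measure G) [IsHaarMeasure ν] [IsProbabilityMeasure ν] (β : G) :
    Measure.map (· * β) ν = ν := by
  haveI : IsProbabilityMeasure (Measure.map (· * β) ν) :=
    Measure.isProbabilityMeasure_map (measurable_mul_const β).aemeasurable
  have h := isMulInvariant_eq_smul_of_compactSpace (Measure.map (· * β) ν) ν
  have hu := congrArg (fun m : Measure G => m Set.univ) h
  simp only [measure_univ, Measure.smul_apply, smul_eq_mul] at hu
  rw [ENNReal.smul_def, smul_eq_mul, mul_one] at hu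
  rw [h]
  ext s hs
  rw [Measure.smul_apply, ENNReal.smul_def, smul_eq_mul, ← hu, one_mul]

lemma aux_integral_right_translate (ν : Measure G) [IsHaarMeasure ν] [IsProbabilityMeasure ν]
    (β : G) {q : G → ℝ} (hq : Continuous q) :
    ∫ α, q (α * β) ∂ν = ∫ α, q α ∂ν := by
  conv_rhs => rw [← aux_haar_map_mul_right ν β]
  rw [integral_map (measurable_mul_const β).aemeasurable
    ((aux_haar_map_mul_right ν β).symm ▸ hq.aestronglyMeasurable)]

/-- The integral of a continuous function over an orbit with respect to the Haar probability
measure equals its integral with respect to an invariant probability measure on the space. -/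
lemma aux_orbit_integral {X : Type*} [TopologicalSpace X] [CompactSpace X] [T2Space X]
    [MeasurableSpace X] [BorelSpace X]
    [MulAction G X] [ContinuousSMul G X] [MulAction.IsPretransitive G X]
    (μ : Measure X) [IsProbabilityMeasure μ]
    (hinvR : ∀ (F : C(X, ℝ)) (α : G), ∫ x, F x ∂μ = ∫ x, F (α • x) ∂μ)
    (ν : Measure G) [IsHaarMeasure ν] [IsProbabilityMeasure ν]
    (F : C(X, ℝ)) (x : X) :
    ∫ α, F (α • x) ∂ν = ∫ y, F y ∂μ := by
  have hFc : Continuous fun p : G × X => F (p.1 • p.2) :=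
    F.continuous.comp continuous_smul
  have hΦinv : ∀ (β : G) (y : X), ∫ α, F (α • (β • y)) ∂ν = ∫ α, F (α • y) ∂ν := by
    intro β y
    have h1 : ∀ α : G, F (α • β • y) = F ((α * β) • y) := fun α => by rw [mul_smul]
    simp only [h1]
    exact aux_integral_right_translate ν β
      (F.continuous.comp (continuous_id.smul continuous_const))
  have hΦconst : ∀ y : X, ∫ α, F (α • y) ∂ν = ∫ α, F (α • x) ∂ν := by
    intro y
    obtain ⟨β, hβ⟩ := MulAction.exists_smul_eq G x y
    rw [← hβ, hΦinv β x]
  have swap : ∫ α, (∫ y, F (α • y) ∂μ) ∂ν = ∫ y, (∫ α, F (α • y) ∂ν) ∂μ := by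
    apply integral_integral_swap_of_hasCompactSupport
    · exact hFc
    · exact (isClosed_tsupport _).isCompact
  have hL : ∫ α, (∫ y, F (α • y) ∂μ) ∂ν = ∫ y, F y ∂μ := by
    have : ∀ α : G, (∫ y, F (α • y) ∂μ) = ∫ y, F y ∂μ := fun α => (hinvR F α).symm
    simp only [this, integral_const, measure_univ, probReal_univ, ENNReal.toReal_one, smul_eq_mul, one_mul]
  have hR : ∫ y, (∫ α, F (α • y) ∂ν) ∂μ = ∫ α, F (α • x) ∂ν := by
    simp only [hΦconst, integral_const, measure_univ, probReal_univ, ENNReal.toReal_one, smul_eq_mul, one_mul]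
  rw [← hR, ← swap, hL]

/-- The `L¹` norm of a continuous function is at most its `L²` norm, for a probability measure. -/
lemma aux_l1_le_l2 {X : Type*} [TopologicalSpace X] [CompactSpace X] [T2Space X]
    [MeasurableSpace X] [BorelSpace X] (μ : Measure X) [IsProbabilityMeasure μ] (h : C(X, ℂ)) :
    ∫ y, ‖h y‖ ∂μ ≤ ‖ContinuousMap.toLp 2 μ ℂ h‖ := by
  have hi : Integrable (⇑h) μ := aux_integrable_of_continuous μ h.continuous
  have h2 : eLpNorm (⇑h) 1 μ ≤ eLpNorm (⇑h) 2 μ :=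
    eLpNorm_le_eLpNorm_of_exponent_le (by norm_num) h.continuous.aestronglyMeasurable
  have hfin : eLpNorm (⇑h) 2 μ ≠ ⊤ := by
    have h3 := (Lp.memLp (ContinuousMap.toLp 2 μ ℂ h)).2
    rw [eLpNorm_congr_ae (ContinuousMap.coeFn_toLp (𝕜 := ℂ) μ h)] at h3
    exact h3.ne
  have e1 : ∫ y, ‖h y‖ ∂μ = (eLpNorm (⇑h) 1 μ).toReal := by
    rw [eLpNorm_one_eq_lintegral_enorm, ← ofReal_integral_norm_eq_lintegral_enorm hi,
      ENNReal.toReal_ofReal (integral_nonneg fun y => norm_nonneg _)]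
  have e2 : ‖ContinuousMap.toLp 2 μ ℂ h‖ = (eLpNorm (⇑h) 2 μ).toReal := by
    rw [Lp.norm_def, eLpNorm_congr_ae (ContinuousMap.coeFn_toLp (𝕜 := ℂ) μ h)]
  rw [e1, e2]
  exact ENNReal.toReal_mono hfin h2

end Aux

/-- Let `Y` be a `G`-invariant linear subspace of `C(X)` and `g ∈ C(X)`. If
`g` is not in the uniform closure of `Y`, then `g` is not in the `L²(μ)`-closure of `Y`. -/
theorem not_mem_L2_closure_of_not_mem_uniform_closure
    {X : Type*} [TopologicalSpace X] [CompactSpace X] [T2Space X]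
    [MeasurableSpace X] [BorelSpace X]
    {G : Type*} [Group G] [TopologicalSpace G] [IsTopologicalGroup G] [CompactSpace G]
    [MulAction G X] [ContinuousSMul G X] [MulAction.IsPretransitive G X]
    (μ : Measure X) [IsProbabilityMeasure μ] [μ.Regular]
    (hinv : ∀ (f : C(X, ℂ)) (α : G), ∫ x, f x ∂μ = ∫ x, f (α • x) ∂μ)
    (Y : Submodule ℂ C(X, ℂ))
    (hYinv : ∀ f ∈ Y, ∀ α : G, f.comp ⟨fun x => α • x, continuous_const_smul α⟩ ∈ Y)
    (g : C(X, ℂ)) (hg : g ∉ closure (Y : Set C(X, ℂ))) :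
    ContinuousMap.toLp 2 μ ℂ g ∉
      closure ((ContinuousMap.toLp 2 μ ℂ) '' (Y : Set C(X, ℂ))) := by
  intro hmem
  -- extract a positive uniform distance from `g` to `Y`
  rw [Metric.mem_closure_iff] at hg
  push_neg at hg
  obtain ⟨ε, hε, hfar⟩ := hg
  -- set up the Haar probability measure on `G`
  borelize G
  haveI : Nonempty G := ⟨1⟩
  set ν : Measure G := haarMeasure (⊤ : PositiveCompacts G) with hν
  haveI : IsProbabilityMeasure ν :=
    ⟨by rw [← PositiveCompacts.coe_top (α := G)]; exact haarMeasure_self⟩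
  -- real version of the invariance hypothesis
  have hinvR : ∀ (F : C(X, ℝ)) (α : G), ∫ x, F x ∂μ = ∫ x, F (α • x) ∂μ := by
    intro F α
    have h := hinv (ContinuousMap.comp ⟨Complex.ofReal, Complex.continuous_ofReal⟩ F) α
    simp only [ContinuousMap.comp_apply, ContinuousMap.coe_mk] at h
    have h1 : ∫ x, ((F x : ℝ) : ℂ) ∂μ = ((∫ x, F x ∂μ : ℝ) : ℂ) := integral_ofReal
    have h2 : ∫ x, ((F (α • x) : ℝ) : ℂ) ∂μ = ((∫ x, F (α • x) ∂μ : ℝ) : ℂ) := integral_ofReal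
    rw [h1, h2] at h
    exact_mod_cast h
  -- find a neighborhood `U` of `1` controlling the oscillation of `g`
  have hNopen : IsOpen {p : G × X | ‖g (p.1 • p.2) - g p.2‖ < ε / 4} := by
    have hc : Continuous fun p : G × X => ‖g (p.1 • p.2) - g p.2‖ :=
      ((g.continuous.comp continuous_smul).sub (g.continuous.comp continuous_snd)).norm
    exact isOpen_lt hc continuous_const
  have hNsub : ({1} : Set G) ×ˢ (univ : Set X) ⊆ {p : G × X | ‖g (p.1 • p.2) - g p.2‖ < ε / 4} := by
    rintro ⟨a, x⟩ ⟨ha, -⟩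
    simp only [mem_singleton_iff] at ha
    subst ha
    simp only [mem_setOf_eq, one_smul, _root_.sub_self, norm_zero]
    positivity
  obtain ⟨U, V, hUopen, -, hU1, hVuniv, hUV⟩ :=
    generalized_tube_lemma isCompact_singleton isCompact_univ hNopen hNsub
  have h1U : (1 : G) ∈ U := hU1 (Set.mem_singleton 1)
  have hUprop : ∀ α ∈ U, ∀ x : X, ‖g (α • x) - g x‖ < ε / 4 := by
    intro α hα x
    have hp : ((α, x) : G × X) ∈ U ×ˢ V := Set.mk_mem_prod hα (hVuniv (mem_univ x))
    have h2 := hUV hp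
    rw [Set.mem_setOf_eq] at h2
    exact h2
  -- construct the kernel `K`
  haveI : LocallyCompactSpace G :=
    (Classical.arbitrary (PositiveCompacts G)).locallyCompactSpace_of_group
  have hdisj : Disjoint ({1} : Set G) Uᶜ := by
    simp only [Set.disjoint_left, Set.mem_singleton_iff]
    rintro a rfl
    simpa using h1U
  obtain ⟨k, hk1, hk0, -, hk01⟩ :=
    exists_continuous_one_zero_of_isCompact (isCompact_singleton : IsCompact ({1} : Set G))
      hUopen.isClosed_compl hdisj
  have hkint : Integrable (⇑k) ν := aux_integrable_of_continuous ν k.continuous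
  have hkpos : 0 < ∫ α, k α ∂ν := by
    rw [integral_pos_iff_support_of_nonneg (fun α => (hk01 α).1) hkint]
    have hopen : IsOpen (Function.support ⇑k) := by
      rw [Function.support_eq_preimage]
      exact isOpen_compl_singleton.preimage k.continuous
    refine hopen.measure_pos ν ⟨1, ?_⟩
    simp only [Function.mem_support]
    rw [hk1 rfl]
    norm_num
  set c : ℝ := ∫ α, k α ∂ν with hc
  set K : C(G, ℝ) := c⁻¹ • k with hK
  have hKapp : ∀ α : G, K α = c⁻¹ * k α := fun α => rfl
  have hKnonneg : ∀ α : G, 0 ≤ K α := fun α => by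
    rw [hKapp]
    exact mul_nonneg (inv_nonneg.mpr hkpos.le) (hk01 α).1
  have hKone : ∫ α, K α ∂ν = 1 := by
    simp only [hKapp]
    rw [integral_const_mul, inv_mul_cancel₀ hkpos.ne']
  have hK0 : ∀ α : G, α ∉ U → K α = 0 := fun α hα => by
    rw [hKapp, hk0 hα]
    simp
  -- the averaging operator
  set act : C(G × X, X) := ⟨fun p => p.1 • p.2, continuous_smul⟩ with hact
  set A : C(X, ℂ) → C(G, C(X, ℂ)) := fun w => ContinuousMap.curry (w.comp act) with hA
  have hAapp : ∀ (w : C(X, ℂ)) (α : G) (x : X), (A w) α x = w (α • x) := fun _ _ _ => rfl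
  have integT : ∀ w : C(X, ℂ), Integrable (fun α => K α • (A w) α) ν := fun w =>
    aux_integrable_of_continuous ν (K.continuous.smul (A w).continuous)
  set T : C(X, ℂ) → C(X, ℂ) := fun w => ∫ α, K α • (A w) α ∂ν with hT
  -- pointwise formula for T
  have hTeval : ∀ (w : C(X, ℂ)) (x : X), (T w) x = ∫ α, K α • w (α • x) ∂ν := by
    intro w x
    have h1 := (ContinuousMap.evalCLM ℂ x).integral_comp_comm (integT w)
    calc (T w) x = ∫ α, (ContinuousMap.evalCLM ℂ x) (K α • (A w) α) ∂ν := h1.symm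
      _ = ∫ α, K α • w (α • x) ∂ν := by
          refine integral_congr_ae (Filter.Eventually.of_forall fun α => ?_)
          rfl
  -- integrability of the pointwise integrands
  have integPt : ∀ (w : C(X, ℂ)) (x : X), Integrable (fun α => K α • w (α • x)) ν := by
    intro w x
    exact aux_integrable_of_continuous ν
      (K.continuous.smul (w.continuous.comp (continuous_id.smul continuous_const)))
  -- `T g` is uniformly close to `g`
  have hTg : ‖T g - g‖ ≤ ε / 4 := by
    rw [ContinuousMap.norm_le _ (by positivity)]
    intro x
    rw [ContinuousMap.sub_apply, hTeval g x]
    have hgx : g x = ∫ α, K α • g x ∂ν := by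
      rw [integral_smul_const, hKone, one_smul]
    rw [hgx, ← integral_sub (integPt g x)
      (aux_integrable_of_continuous (f := fun α => K α • g x) ν (K.continuous.smul continuous_const))]
    simp only [← smul_sub]
    refine (norm_integral_le_integral_norm _).trans ?_
    have hb : ∫ α, ‖K α • (g (α • x) - g x)‖ ∂ν ≤ ∫ α, K α * (ε / 4) ∂ν := by
      refine integral_mono
        (aux_integrable_of_continuous ν (K.continuous.smul
          ((g.continuous.comp (continuous_id.smul continuous_const)).sub
            continuous_const)).norm)
        (aux_integrable_of_continuous ν (K.continuous.mul continuous_const)) fun α => ?_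
      rw [norm_smul, Real.norm_of_nonneg (hKnonneg α)]
      by_cases hα : α ∈ U
      · exact mul_le_mul_of_nonneg_left (hUprop α hα x).le (hKnonneg α)
      · rw [hK0 α hα]
        simp
    refine hb.trans ?_
    rw [integral_mul_const, hKone, one_mul]
  -- membership of `T f` in the closure of `Y`, for `f ∈ Y`
  set M : Submodule ℂ C(X, ℂ) := Y.topologicalClosure with hM
  haveI : CompleteSpace M := Y.isClosed_topologicalClosure.completeSpace_coe
  have hTmem : ∀ f ∈ Y, T f ∈ closure (Y : Set C(X, ℂ)) := by
    intro f hfY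
    have hAf : ∀ α : G, (A f) α ∈ Y := by
      intro α
      have h := hYinv f hfY α
      have : (A f) α = f.comp ⟨fun x => α • x, continuous_const_smul α⟩ :=
        ContinuousMap.ext fun x => rfl
      rwa [this]
    have hvals : ∀ α : G, K α • (A f) α ∈ M := fun α =>
      M.smul_of_tower_mem (K α) (Y.le_topologicalClosure (hAf α))
    set FM : G → M := fun α => ⟨K α • (A f) α, hvals α⟩ with hFM
    have hFMc : Continuous FM :=
      Continuous.subtype_mk (K.continuous.smul (A f).continuous) _
    have hFMint : Integrable FM ν := aux_integrable_of_continuous ν hFMc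
    have hcomm := M.subtypeL.integral_comp_comm hFMint
    have hTf : T f = M.subtypeL (∫ α, FM α ∂ν) := by
      rw [← hcomm]
      rfl
    rw [← Submodule.topologicalClosure_coe, ← hM, hTf]
    exact (∫ α, FM α ∂ν).2
  -- obtain a function `f ∈ Y` very close to `g` in `L²`
  set δ : ℝ := ε / (4 * (‖K‖ + 1)) with hδdef
  have hnK : (0 : ℝ) < ‖K‖ + 1 := by positivity
  have hδ : 0 < δ := by positivity
  rw [Metric.mem_closure_iff] at hmem
  obtain ⟨b, hb, hdist⟩ := hmem δ hδ
  obtain ⟨f, hfY, rfl⟩ := hb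
  -- `T g` is close to `T f` uniformly
  have hTgf : ‖T g - T f‖ ≤ ‖K‖ * ∫ y, ‖g y - f y‖ ∂μ := by
    have hC : (0 : ℝ) ≤ ‖K‖ * ∫ y, ‖g y - f y‖ ∂μ :=
      mul_nonneg (norm_nonneg _) (integral_nonneg fun y => norm_nonneg _)
    rw [ContinuousMap.norm_le _ hC]
    intro x
    rw [ContinuousMap.sub_apply, hTeval g x, hTeval f x,
      ← integral_sub (integPt g x) (integPt f x)]
    simp only [← smul_sub]
    refine (norm_integral_le_integral_norm _).trans ?_
    have hstep : ∫ α, ‖K α • (g (α • x) - f (α • x))‖ ∂ν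
        ≤ ∫ α, ‖K‖ * ‖g (α • x) - f (α • x)‖ ∂ν := by
      refine integral_mono
        (aux_integrable_of_continuous ν (K.continuous.smul
          (((g.continuous.sub f.continuous)).comp (continuous_id.smul continuous_const))).norm)
        (aux_integrable_of_continuous ν (continuous_const.mul
          (((g.continuous.sub f.continuous)).comp
            (continuous_id.smul continuous_const)).norm)) fun α => ?_
      rw [norm_smul]
      exact mul_le_mul_of_nonneg_right (K.norm_coe_le_norm α) (norm_nonneg _)
    refine hstep.trans ?_
    rw [integral_const_mul]
    have hkey := aux_orbit_integral μ hinvR ν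
      ⟨fun y => ‖g y - f y‖, (g.continuous.sub f.continuous).norm⟩ x
    simp only [ContinuousMap.coe_mk] at hkey
    rw [hkey]
  -- compare with the `L²` distance
  have hL2 : ∫ y, ‖g y - f y‖ ∂μ ≤ ‖ContinuousMap.toLp 2 μ ℂ g - ContinuousMap.toLp 2 μ ℂ f‖ := by
    have hmap : ContinuousMap.toLp 2 μ ℂ g - ContinuousMap.toLp 2 μ ℂ f
        = ContinuousMap.toLp 2 μ ℂ (g - f) := (map_sub (ContinuousMap.toLp 2 μ ℂ) g f).symm
    rw [hmap]
    have := aux_l1_le_l2 μ (g - f)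
    simpa using this
  -- final contradiction
  have hclose : dist g (T f) < ε := by
    rw [dist_eq_norm]
    have htri : ‖g - T f‖ ≤ ‖g - T g‖ + ‖T g - T f‖ := norm_sub_le_norm_sub_add_norm_sub g (T g) (T f)
    have h1 : ‖g - T g‖ ≤ ε / 4 := by rw [norm_sub_rev]; exact hTg
    have h2 : ‖T g - T f‖ ≤ ε / 4 := by
      refine hTgf.trans ?_
      have hd : ‖ContinuousMap.toLp 2 μ ℂ g - ContinuousMap.toLp 2 μ ℂ f‖ < δ := by
        rw [← dist_eq_norm]
        exact hdist
      have : ‖K‖ * ∫ y, ‖g y - f y‖ ∂μ ≤ (‖K‖ + 1) * δ := by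
        calc ‖K‖ * ∫ y, ‖g y - f y‖ ∂μ ≤ ‖K‖ * δ :=
              mul_le_mul_of_nonneg_left (hL2.trans hd.le) (norm_nonneg _)
          _ ≤ (‖K‖ + 1) * δ := by nlinarith [norm_nonneg K]
      refine this.trans (le_of_eq ?_)
      rw [hδdef]
      field_simp
    linarith
  have hge : ε ≤ dist g (T f) := by
    have hclosed : IsClosed {y : C(X, ℂ) | ε ≤ dist g y} :=
      isClosed_le continuous_const (continuous_const.dist continuous_id)
    have hsub : (Y : Set C(X, ℂ)) ⊆ {y : C(X, ℂ) | ε ≤ dist g y} := fun y hy =>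
      hfar y hy
    exact closure_minimal hsub hclosed (hTmem f hfY)
  linarith
end
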